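/- In ℍ(−1,−1), suppose b is a quaternion with Re(b) = 0 (b purely imaginary), c a quaternion, and suppose reals W, Y satisfy: b + W is invertible, Y² − (A + W²)Y + B = 0, and W³ + (A − 2Y)W + C = 0, where A = |b|² + 2Re(c), B = |c|², C = 2Re(conj(b)·c). Then x = −(b + W)⁻¹(c − Y) satisfies x² + bx + c = 0. -/

import Mathlib

open Quaternion

theorem case4_key (b c : ℍ[ℝ]) (hb : b.re = 0) (W Y : ℝ)
    (hinv : b + (W : ℍ[ℝ]) ≠ 0)
    (h1 : Y ^ 2 - ((normSq b + 2 * c.re) + W ^ 2) * Y + normSq c = 0)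
    (h2 : W ^ 3 + ((normSq b + 2 * c.re) - 2 * Y) * W + 2 * (star b * c).re = 0) :
    let x : ℍ[ℝ] := -((b + (W : ℍ[ℝ]))⁻¹ * (c - (Y : ℍ[ℝ])))
    x ^ 2 + b * x + c = 0 := by
  intro x
  set u : ℍ[ℝ] := b + (W : ℍ[ℝ]) with hu
  have hux : u * x = -(c - (Y : ℍ[ℝ])) := by
    simp only [x, ← hu, mul_neg, ← mul_assoc, mul_inv_cancel₀ hinv, one_mul]
  have hnu : normSq u = normSq b + W ^ 2 := by
    simp [hu, normSq_def', hb]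
    ring
  have hn : normSq b + W ^ 2 ≠ 0 := hnu ▸ normSq_ne_zero.2 hinv
  have hxdef : x = -(((normSq b + W ^ 2)⁻¹ : ℝ) • (star u * (c - (Y : ℍ[ℝ])))) := by
    show -(u⁻¹ * _) = _
    rw [Quaternion.inv_def, hnu, smul_mul_assoc]
  have hsb : star b = -b := star_eq_neg.2 hb
  have hK : (star u * (c - (Y : ℍ[ℝ]))).re
      = W * c.re - W * Y + (star b * c).re := by
    simp [hu, star_add, hsb, Quaternion.re_mul, hb]
    ring
  have hre : 2 * x.re = W := by
    rw [hxdef]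
    simp only [Quaternion.re_neg, Quaternion.re_smul, smul_eq_mul, hK]
    have key : 2 * (W * c.re - W * Y + (star b * c).re)
        = -((normSq b + W ^ 2) * W) := by linear_combination h2
    set K := (star b * c).re with hKd
    set A := normSq b with hAd
    field_simp
    linear_combination -key
  have hns : normSq x = Y := by
    have h4 : normSq x = (normSq b + W ^ 2)⁻¹ * (normSq c - 2 * Y * c.re + Y ^ 2) := by
      rw [hxdef, normSq_neg, normSq_smul, map_mul, normSq_star, hnu]
      have h5 : normSq (c - (Y : ℍ[ℝ])) = normSq c - 2 * Y * c.re + Y ^ 2 := by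
        simp [normSq_def']
        ring
      rw [h5]
      field_simp
    rw [h4]
    set A := normSq b with hAd
    set Nc := normSq c with hNd
    field_simp
    linear_combination h1
  have hchar : x ^ 2 - (2 * x.re : ℝ) • x + ((normSq x : ℝ) : ℍ[ℝ]) = 0 := by
    ext <;>
      simp [pow_two, Quaternion.re_mul, Quaternion.imI_mul, Quaternion.imJ_mul,
        Quaternion.imK_mul, normSq_def'] <;> ring
  have hbx : b * x = -(c - (Y : ℍ[ℝ])) - (W : ℍ[ℝ]) * x := by
    have hb' : b = u - (W : ℍ[ℝ]) := by rw [hu]; abel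
    rw [hb', sub_mul, hux]
  rw [hbx]
  have hW : (W : ℍ[ℝ]) * x = (2 * x.re : ℝ) • x := by
    rw [hre, Quaternion.coe_mul_eq_smul]
  rw [hW]
  have hY : (Y : ℍ[ℝ]) = ((normSq x : ℝ) : ℍ[ℝ]) := by rw [hns]
  rw [hY, ← hchar]
  abel
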